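/- Let (X, μ) be a measure space, let σ ⊆ σ̃ ⊆ X be measurable sets, and let φ₁, …, φ_n : X → ℝ be square-integrable on σ̃. Suppose ψ = Σ_{k=1}^n ξ_k φ_k satisfies ∫_σ ψ φ_j dμ = δ_{1j} for all j = 1, …, n, and ψ̃ = Σ_{k=1}^n ξ̃_k φ_k satisfies ∫_{σ̃} ψ̃ φ_j dμ = δ_{1j} for all j = 1, …, n. Then ∫_σ ψ̃ ψ dμ = ξ̃₁ = ∫_{σ̃} ψ̃² dμ. -/

import Mathlib

open MeasureTheory

set_option maxHeartbeats 1000000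

private theorem memL2_integrable_mul {α : Type*} [MeasurableSpace α] {μ : Measure α}
    {f g : α → ℝ} (hf : MemLp f 2 μ) (hg : MemLp g 2 μ) :
    Integrable (fun x => f x * g x) μ := by
  rw [← memLp_one_iff_integrable]
  have h := hg.smul hf (p := 2) (q := 2) (r := 1)
  exact h

/-- Key identity in the proof of the extension lemma: if `ψ` is dual to `φ₁`
on `σ` and `ψ̃` is dual to `φ₁` on `σ̃ ⊇ σ`, then
`∫_σ ψ̃ ψ dμ = ξ̃₁ = ∫_{σ̃} ψ̃² dμ`. -/
theorem extend_integration_domain_key_identity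
    {X : Type*} [MeasurableSpace X] (μ : Measure X)
    (σ σt : Set X) (hσ : MeasurableSet σ) (hσt : MeasurableSet σt)
    (hsub : σ ⊆ σt)
    (n : ℕ) (φ : Fin (n + 1) → X → ℝ)
    (hφ : ∀ k, MemLp (φ k) 2 (μ.restrict σt))
    (ξ ξt : Fin (n + 1) → ℝ) (ψ ψt : X → ℝ)
    (hψ : ψ = fun x => ∑ k, ξ k * φ k x)
    (hψt : ψt = fun x => ∑ k, ξt k * φ k x)
    (hdual : ∀ j, ∫ x in σ, ψ x * φ j x ∂μ = if j = 0 then 1 else 0)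
    (hdualt : ∀ j, ∫ x in σt, ψt x * φ j x ∂μ = if j = 0 then 1 else 0) :
    (∫ x in σ, ψt x * ψ x ∂μ) = ξt 0 ∧ ξt 0 = ∫ x in σt, (ψt x) ^ 2 ∂μ := by
  subst hψ; subst hψt
  have hres : μ.restrict σ ≤ μ.restrict σt := Measure.restrict_mono hsub le_rfl
  have hφσ : ∀ k, MemLp (φ k) 2 (μ.restrict σ) := fun k => (hφ k).mono_measure hres
  have hψ2 : MemLp (fun x => ∑ k, ξ k * φ k x) 2 (μ.restrict σ) :=
    memLp_finset_sum _ (fun k _ => (hφσ k).const_mul _)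
  have hψt2 : MemLp (fun x => ∑ k, ξt k * φ k x) 2 (μ.restrict σt) :=
    memLp_finset_sum _ (fun k _ => (hφ k).const_mul _)
  have hd : ∀ k, ∫ x in σ, φ k x * (∑ j, ξ j * φ j x) ∂μ = if k = 0 then 1 else 0 := by
    intro k; rw [← hdual k]; congr 1; ext x; ring
  have hdt : ∀ k, ∫ x in σt, φ k x * (∑ j, ξt j * φ j x) ∂μ = if k = 0 then 1 else 0 := by
    intro k; rw [← hdualt k]; congr 1; ext x; ring
  constructor
  · calc ∫ x in σ, (∑ k, ξt k * φ k x) * (∑ j, ξ j * φ j x) ∂μ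
        = ∫ x in σ, ∑ k, ξt k * (φ k x * (∑ j, ξ j * φ j x)) ∂μ := by
          congr 1; funext x
          rw [Finset.sum_mul]
          exact Finset.sum_congr rfl fun k _ => by ring
      _ = ∑ k, ∫ x in σ, ξt k * (φ k x * (∑ j, ξ j * φ j x)) ∂μ :=
          integral_finset_sum _
            (fun k _ => ((memL2_integrable_mul (hφσ k) hψ2)).const_mul _)
      _ = ∑ k, ξt k * ∫ x in σ, φ k x * (∑ j, ξ j * φ j x) ∂μ := by
          simp [integral_const_mul]
      _ = ξt 0 := by simp [hd]
  · calc ξt 0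
        = ∑ k, ξt k * ∫ x in σt, φ k x * (∑ j, ξt j * φ j x) ∂μ := by simp [hdt]
      _ = ∑ k, ∫ x in σt, ξt k * (φ k x * (∑ j, ξt j * φ j x)) ∂μ := by
          simp [integral_const_mul]
      _ = ∫ x in σt, ∑ k, ξt k * (φ k x * (∑ j, ξt j * φ j x)) ∂μ :=
          (integral_finset_sum _
            (fun k _ => ((memL2_integrable_mul (hφ k) hψt2)).const_mul _)).symm
      _ = ∫ x in σt, (∑ k, ξt k * φ k x) ^ 2 ∂μ := by
          congr 1; funext x
          rw [pow_two, Finset.sum_mul]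
          exact Finset.sum_congr rfl fun k _ => by ring
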